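/- arXiv:1009.3705 — 5 statements merged into one kernel-verified Lean document; each statement's English description precedes it below -/
import Mathlib

section
/- Let h : [0, r) → ℝ be a C^2 function with h'(0) = 0, lim_{u→r} h(u) = ∞, and satisfying h''(u) (h'(u))^{n-1} = e^{λ h(u)} D(u) for all u ∈ [0, r), where D is continuous, D(u) > 0 for u ∈ (0, r), and D(0) = 0 (for n ≥ 2). Then h'(u) > 0 and h''(u) > 0 for all u ∈ (0, r). -/
open Real Set

theorem derivatives_positive_of_blowup
    (n : ℕ) (hn : 1 ≤ n) (lam r : ℝ) (hlam : 0 < lam) (hr : 0 < r)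
    (D h h' h'' : ℝ → ℝ)
    (hD : ContinuousOn D (Set.Ico 0 r))
    (hDpos : ∀ u ∈ Set.Ioo 0 r, 0 < D u)
    (hder1 : ∀ u ∈ Set.Ico 0 r, HasDerivAt h (h' u) u)
    (hder2 : ∀ u ∈ Set.Ico 0 r, HasDerivAt h' (h'' u) u)
    (hcont : ContinuousOn h'' (Set.Ico 0 r))
    (h'0 : h' 0 = 0)
    (hblow : Filter.Tendsto h (nhdsWithin r (Set.Iio r)) Filter.atTop)
    (hODE : ∀ u ∈ Set.Ico 0 r, h'' u * (h' u) ^ (n - 1) = Real.exp (lam * h u) * D u) :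
    ∀ u ∈ Set.Ioo 0 r, 0 < h' u ∧ 0 < h'' u := by
  have hsub : Set.Ioo 0 r ⊆ Set.Ico 0 r := Ioo_subset_Ico_self
  have hRHSpos : ∀ u ∈ Set.Ioo 0 r, 0 < Real.exp (lam * h u) * D u := fun u hu =>
    mul_pos (Real.exp_pos _) (hDpos u hu)
  have hcont' : ContinuousOn h' (Set.Ico 0 r) := fun u hu =>
    (hder2 u hu).continuousAt.continuousWithinAt
  rcases eq_or_lt_of_le hn with h1 | h2
  · -- n = 1
    have hpp : ∀ u ∈ Set.Ioo 0 r, 0 < h'' u := by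
      intro u hu
      have := hODE u (hsub hu)
      simp [← h1] at this
      rw [this]; exact hRHSpos u hu
    have hmono : StrictMonoOn h' (Set.Ico 0 r) := by
      apply strictMonoOn_of_deriv_pos (convex_Ico 0 r) hcont'
      intro x hx
      rw [interior_Ico] at hx
      rw [(hder2 x (hsub hx)).deriv]
      exact hpp x hx
    intro u hu
    have h'pos : 0 < h' u := by
      have := hmono ⟨le_refl 0, hr⟩ (hsub hu) hu.1
      rwa [h'0] at this
    exact ⟨h'pos, hpp u hu⟩
  · -- n ≥ 2
    have hne : ∀ u ∈ Set.Ioo 0 r, h' u ≠ 0 := by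
      intro u hu h0
      have := hODE u (hsub hu)
      rw [h0, zero_pow (by omega : n - 1 ≠ 0), mul_zero] at this
      exact absurd this.symm (ne_of_gt (hRHSpos u hu))
    -- h' > 0 on Ioo 0 r
    have h'pos : ∀ u ∈ Set.Ioo 0 r, 0 < h' u := by
      by_contra hcon
      push_neg at hcon
      obtain ⟨u0, hu0, hu0le⟩ := hcon
      have hu0neg : h' u0 < 0 := lt_of_le_of_ne hu0le (hne u0 hu0)
      -- then h' < 0 on all of Ioo 0 r
      have hallneg : ∀ v ∈ Set.Ioo 0 r, h' v < 0 := by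
        intro v hv
        rcases lt_trichotomy (h' v) 0 with h | h | h
        · exact h
        · exact absurd h (hne v hv)
        · -- IVT gives a zero between u0 and v
          exfalso
          rcases lt_trichotomy u0 v with hlt | heq | hgt
          · have hIcc : Set.Icc u0 v ⊆ Set.Ioo 0 r := Set.Icc_subset_Ioo hu0.1 hv.2
            have := intermediate_value_Icc hlt.le ((hcont'.mono (hIcc.trans hsub)))
            obtain ⟨c, hc, hc0⟩ := this ⟨hu0neg.le, h.le⟩
            exact hne c (hIcc hc) hc0
          · rw [heq] at hu0neg; linarith
          · have hIcc : Set.Icc v u0 ⊆ Set.Ioo 0 r := Set.Icc_subset_Ioo hv.1 hu0.2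
            have := intermediate_value_Icc' hgt.le ((hcont'.mono (hIcc.trans hsub)))
            obtain ⟨c, hc, hc0⟩ := this ⟨hu0neg.le, h.le⟩
            exact hne c (hIcc hc) hc0
      -- so h is antitone on Ico 0 r
      have hconth : ContinuousOn h (Set.Ico 0 r) := fun u hu =>
        (hder1 u hu).continuousAt.continuousWithinAt
      have hanti : AntitoneOn h (Set.Ico 0 r) := by
        apply antitoneOn_of_deriv_nonpos (convex_Ico 0 r) hconth
        · intro x hx
          rw [interior_Ico] at hx
          exact (hder1 x (hsub hx)).differentiableAt.differentiableWithinAt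
        intro x hx
        rw [interior_Ico] at hx
        rw [(hder1 x (hsub hx)).deriv]
        exact (hallneg x hx).le
      -- contradiction with blowup
      have hNeBot : (nhdsWithin r (Set.Iio r)).NeBot := by infer_instance
      have hev1 : ∀ᶠ u in nhdsWithin r (Set.Iio r), h 0 < h u :=
        hblow.eventually (Filter.eventually_gt_atTop (h 0))
      have hev2 : ∀ᶠ u in nhdsWithin r (Set.Iio r), u ∈ Set.Ioo 0 r :=
        Filter.eventually_of_mem (Ioo_mem_nhdsLT_of_mem ⟨hr, le_refl r⟩) (fun x hx => hx)
      obtain ⟨u, hu1, hu2⟩ := (hev1.and hev2).exists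
      have := hanti ⟨le_refl 0, hr⟩ (hsub hu2) hu2.1.le
      linarith
    intro u hu
    have hp := h'pos u hu
    have hpow : 0 < (h' u) ^ (n - 1) := pow_pos hp _
    have := hODE u (hsub hu)
    have h''pos : 0 < h'' u := by
      have := hRHSpos u hu
      nlinarith
    exact ⟨hp, h''pos⟩
end

section
/- If a C^2 function h on [0, r) satisfies h''(u)(h'(u))^{n-1} = e^{λ h(u)} D(u), h'(0) = 0, h' ≥ 0, and lim_{u→r} h(u) = ∞, then lim_{u→r} h'(u) = ∞. -/
open Real Set

theorem derivative_blowup_of_blowup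
    (n : ℕ) (hn : 1 ≤ n) (lam r : ℝ) (hlam : 0 < lam) (hr : 0 < r)
    (D h h' h'' : ℝ → ℝ)
    (hD : ContinuousOn D (Set.Ico 0 r))
    (hDpos : ∀ u ∈ Set.Ioo 0 r, 0 < D u)
    (hder1 : ∀ u ∈ Set.Ico 0 r, HasDerivAt h (h' u) u)
    (hder2 : ∀ u ∈ Set.Ico 0 r, HasDerivAt h' (h'' u) u)
    (hcont : ContinuousOn h'' (Set.Ico 0 r))
    (h'0 : h' 0 = 0)
    (h'nonneg : ∀ u ∈ Set.Ico 0 r, 0 ≤ h' u)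
    (hODE : ∀ u ∈ Set.Ico 0 r, h'' u * (h' u) ^ (n - 1) = Real.exp (lam * h u) * D u)
    (hblow : Filter.Tendsto h (nhdsWithin r (Set.Iio r)) Filter.atTop) :
    Filter.Tendsto h' (nhdsWithin r (Set.Iio r)) Filter.atTop := by
  -- h'' > 0 on (0,r)
  have h''pos : ∀ u ∈ Set.Ioo 0 r, 0 < h'' u := by
    intro u hu
    have hu' : u ∈ Set.Ico 0 r := ⟨hu.1.le, hu.2⟩
    have hprod : 0 < h'' u * (h' u) ^ (n - 1) := by
      rw [hODE u hu']
      exact mul_pos (Real.exp_pos _) (hDpos u hu)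
    have hpow : 0 ≤ (h' u) ^ (n - 1) := pow_nonneg (h'nonneg u hu') _
    rcases lt_or_eq_of_le hpow with hp | hp
    · nlinarith [hprod, hp]
    · rw [← hp, mul_zero] at hprod; exact absurd hprod (lt_irrefl 0)
  -- h' strictly monotone on [0,r)
  have hmono : StrictMonoOn h' (Set.Ico 0 r) := by
    apply strictMonoOn_of_deriv_pos (convex_Ico 0 r)
    · intro x hx
      exact (hder2 x hx).continuousAt.continuousWithinAt
    · intro x hx
      rw [interior_Ico] at hx
      rw [(hder2 x ⟨hx.1.le, hx.2⟩).deriv]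
      exact h''pos x hx
  -- h' is unbounded on [0,r)
  have hunb : ∀ M : ℝ, ∃ u ∈ Set.Ico 0 r, M ≤ h' u := by
    intro M
    by_contra hbd
    push_neg at hbd
    have hM : 0 < M := by have := hbd 0 ⟨le_refl 0, hr⟩; rwa [h'0] at this
    -- then h is bounded on [0,r): h u ≤ h 0 + M * r
    have hb : ∀ u ∈ Set.Ico 0 r, h u ≤ h 0 + M * r := by
      intro u hu
      have key : ∀ x ∈ Set.Ico 0 r, HasDerivAt (fun x => h x - M * x) (h' x - M) x := by
        intro x hx'
        have hd := (hder1 x hx').sub ((hasDerivAt_id x).const_mul M)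
        simp only [id, mul_one] at hd
        exact hd
      have hanti : AntitoneOn (fun x => h x - M * x) (Set.Icc 0 u) := by
        apply antitoneOn_of_deriv_nonpos (convex_Icc 0 u)
        · intro x hx
          have hx' : x ∈ Set.Ico 0 r := ⟨hx.1, lt_of_le_of_lt hx.2 hu.2⟩
          exact (key x hx').continuousAt.continuousWithinAt
        · intro x hx
          rw [interior_Icc] at hx
          have hx' : x ∈ Set.Ico 0 r := ⟨hx.1.le, lt_of_le_of_lt hx.2.le hu.2⟩
          exact (key x hx').differentiableAt.differentiableWithinAt
        · intro x hx
          rw [interior_Icc] at hx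
          have hx' : x ∈ Set.Ico 0 r := ⟨hx.1.le, lt_of_le_of_lt hx.2.le hu.2⟩
          rw [(key x hx').deriv]
          have := hbd x hx'
          linarith
      have h0u : (0:ℝ) ∈ Set.Icc 0 u := ⟨le_refl 0, hu.1⟩
      have huu : u ∈ Set.Icc 0 u := ⟨hu.1, le_refl u⟩
      have := hanti h0u huu hu.1
      simp only [mul_zero, sub_zero] at this
      nlinarith [hu.2]
    -- contradiction with blow up
    have hev : ∀ᶠ u in nhdsWithin r (Set.Iio r), h 0 + M * r + 1 ≤ h u :=
      hblow.eventually_ge_atTop _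
    have hev2 : ∀ᶠ u in nhdsWithin r (Set.Iio r), u ∈ Set.Ioo 0 r := by
      filter_upwards [self_mem_nhdsWithin,
        eventually_nhdsWithin_of_eventually_nhds (eventually_gt_nhds hr)] with u h1 h2
      exact ⟨h2, h1⟩
    have hne : (nhdsWithin r (Set.Iio r)).NeBot := nhdsLT_neBot r
    obtain ⟨u, hu1, hu2⟩ := (hev.and hev2).exists
    have := hb u ⟨hu2.1.le, hu2.2⟩
    linarith
  -- conclude
  rw [Filter.tendsto_atTop]
  intro M
  obtain ⟨u0, hu0, hMu0⟩ := hunb M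
  have hmem : Set.Ioo u0 r ∈ nhdsWithin r (Set.Iio r) := by
    rw [mem_nhdsWithin]
    exact ⟨Set.Ioi u0, isOpen_Ioi, hu0.2, fun x hx => ⟨hx.1, hx.2⟩⟩
  filter_upwards [hmem] with u hu
  exact le_trans hMu0 (hmono hu0 ⟨le_trans hu0.1 hu.1.le, hu.2⟩ hu.1).le
end

section
/- Let 0 < s < r and let h_r on [0, r) and h_s on [0, s) be the respective C^2 solutions of h''(u)(h'(u))^{n-1} = e^{λ h(u)} D(u) with h'(0) = 0, h', h'' > 0 on (0, ·), and boundary blow-up lim_{u→r} h_r(u) = ∞, lim_{u→s} h_s(u) = ∞. Then h_r(u) ≤ h_s(u) for all u ∈ [0, s). -/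
open Real Set

theorem comparison_of_blowup_solutions
    (n : ℕ) (hn : 1 ≤ n) (lam s r : ℝ) (hlam : 0 < lam) (hs : 0 < s) (hsr : s < r)
    (D hr' hr'' hs' hs'' : ℝ → ℝ) (hR hS : ℝ → ℝ)
    (hD : ContinuousOn D (Set.Ico 0 r))
    (hDnonneg : ∀ u ∈ Set.Ico 0 r, 0 ≤ D u)
    (hDzero : ∀ u ∈ Set.Ico 0 r, D u = 0 ↔ u = 0)
    (hderR1 : ∀ u ∈ Set.Ico 0 r, HasDerivAt hR (hr' u) u)
    (hderR2 : ∀ u ∈ Set.Ico 0 r, HasDerivAt hr' (hr'' u) u)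
    (hODER : ∀ u ∈ Set.Ico 0 r, hr'' u * (hr' u) ^ (n - 1) = Real.exp (lam * hR u) * D u)
    (hR'0 : hr' 0 = 0)
    (hR'pos : ∀ u ∈ Set.Ioo 0 r, 0 < hr' u)
    (hR''pos : ∀ u ∈ Set.Ioo 0 r, 0 < hr'' u)
    (hRblow : Filter.Tendsto hR (nhdsWithin r (Set.Iio r)) Filter.atTop)
    (hderS1 : ∀ u ∈ Set.Ico 0 s, HasDerivAt hS (hs' u) u)
    (hderS2 : ∀ u ∈ Set.Ico 0 s, HasDerivAt hs' (hs'' u) u)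
    (hODES : ∀ u ∈ Set.Ico 0 s, hs'' u * (hs' u) ^ (n - 1) = Real.exp (lam * hS u) * D u)
    (hS'0 : hs' 0 = 0)
    (hS'pos : ∀ u ∈ Set.Ioo 0 s, 0 < hs' u)
    (hS''pos : ∀ u ∈ Set.Ioo 0 s, 0 < hs'' u)
    (hSblow : Filter.Tendsto hS (nhdsWithin s (Set.Iio s)) Filter.atTop) :
    ∀ u ∈ Set.Ico 0 s, hR u ≤ hS u := by
  by_contra hcon
  push_neg at hcon
  obtain ⟨u0, hu0, hu0lt⟩ := hcon
  -- notation
  set G : ℝ → ℝ := fun x => hR x - hS x with hGdef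
  set F : ℝ → ℝ := fun x => hr' x ^ n - hs' x ^ n with hFdef
  have hsubIco : Set.Ico (0:ℝ) s ⊆ Set.Ico 0 r := fun x hx => ⟨hx.1, hx.2.trans hsr⟩
  have hr'nonneg : ∀ x ∈ Set.Ico (0:ℝ) r, 0 ≤ hr' x := by
    intro x hx
    rcases eq_or_lt_of_le hx.1 with h | h
    · rw [← h, hR'0]
    · exact (hR'pos x ⟨h, hx.2⟩).le
  have hs'nonneg : ∀ x ∈ Set.Ico (0:ℝ) s, 0 ≤ hs' x := by
    intro x hx
    rcases eq_or_lt_of_le hx.1 with h | h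
    · rw [← h, hS'0]
    · exact (hS'pos x ⟨h, hx.2⟩).le
  have hGderiv : ∀ x ∈ Set.Ico (0:ℝ) s, HasDerivAt G (hr' x - hs' x) x := by
    intro x hx
    exact (hderR1 x (hsubIco hx)).sub (hderS1 x hx)
  have hFderiv : ∀ x ∈ Set.Ico (0:ℝ) s,
      HasDerivAt F ((n : ℝ) * D x * (Real.exp (lam * hR x) - Real.exp (lam * hS x))) x := by
    intro x hx
    have h1 := ((hderR2 x (hsubIco hx)).pow n).sub ((hderS2 x hx).pow n)
    have h2 := hODER x (hsubIco hx)
    have h3 := hODES x hx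
    have e : (n:ℝ) * hr' x ^ (n - 1) * hr'' x - (n:ℝ) * hs' x ^ (n - 1) * hs'' x
        = (n : ℝ) * D x * (Real.exp (lam * hR x) - Real.exp (lam * hS x)) := by
      linear_combination (n : ℝ) * h2 - (n : ℝ) * h3
    rw [← e]
    exact h1
  -- bound hR on [0, s]
  have hRcont : ContinuousOn hR (Set.Icc 0 s) := fun x hx =>
    ((hderR1 x ⟨hx.1, lt_of_le_of_lt hx.2 hsr⟩).continuousAt).continuousWithinAt
  obtain ⟨xm, _, hxm⟩ := isCompact_Icc.exists_isMaxOn (Set.nonempty_Icc.mpr hs.le) hRcont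
  set C := hR xm with hCdef
  -- find u1 ∈ (u0, s) with hR u1 < hS u1
  have hmem : Set.Ioo u0 s ∈ nhdsWithin s (Set.Iio s) :=
    Ioo_mem_nhdsLT_of_mem ⟨hu0.2, le_refl s⟩
  have hev : ∀ᶠ x in nhdsWithin s (Set.Iio s), C < hS x := hSblow.eventually_gt_atTop C
  obtain ⟨u1, hu1C, hu1mem⟩ := (hev.and (Filter.eventually_of_mem hmem (fun x hx => hx))).exists
  have hu1lt : u1 < s := hu1mem.2
  have hu1pos : 0 ≤ u1 := le_trans hu0.1 hu1mem.1.le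
  have hGu1 : G u1 < 0 := by
    have : hR u1 ≤ C := hxm ⟨hu1pos, hu1lt.le⟩
    simp only [hGdef]
    linarith
  have hGu0 : 0 < G u0 := by simp only [hGdef]; linarith
  -- maximize G on [0, u1]
  have hGcont : ContinuousOn G (Set.Icc 0 u1) := fun x hx =>
    ((hGderiv x ⟨hx.1, lt_of_le_of_lt hx.2 hu1lt⟩).continuousAt).continuousWithinAt
  obtain ⟨t0, ht0mem, ht0max⟩ := isCompact_Icc.exists_isMaxOn (Set.nonempty_Icc.mpr hu1pos) hGcont
  have hGt0 : 0 < G t0 := lt_of_lt_of_le hGu0 (ht0max ⟨hu0.1, hu1mem.1.le⟩)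
  have ht0lt : t0 < u1 := by
    rcases lt_or_eq_of_le ht0mem.2 with h | h
    · exact h
    · exfalso; rw [h] at hGt0; linarith
  have ht0s : t0 < s := ht0lt.trans hu1lt
  -- F t0 = 0
  have hFt0 : F t0 = 0 := by
    rcases eq_or_lt_of_le ht0mem.1 with h | h
    · simp only [hFdef, ← h, hR'0, hS'0]
      simp [zero_pow (by omega : n ≠ 0)]
    · have hloc : IsLocalMax G t0 := ht0max.isLocalMax (Icc_mem_nhds h ht0lt)
      have := hloc.hasDerivAt_eq_zero (hGderiv t0 ⟨ht0mem.1, ht0s⟩)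
      have heq : hr' t0 = hs' t0 := by linarith
      simp [hFdef, heq]
  -- the first point after t0 where G ≤ 0
  set S' := {t ∈ Set.Icc t0 u1 | G t ≤ 0} with hS'def
  have hS'ne : S'.Nonempty := ⟨u1, ⟨ht0lt.le, le_refl u1⟩, hGu1.le⟩
  have hGcont' : ContinuousOn G (Set.Icc t0 u1) :=
    hGcont.mono (Set.Icc_subset_Icc ht0mem.1 (le_refl u1))
  have hS'closed : IsClosed S' := by
    have : S' = Set.Icc t0 u1 ∩ G ⁻¹' Set.Iic 0 := by
      ext x; simp [hS'def, Set.mem_setOf_eq, and_comm]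
    rw [this]
    exact hGcont'.preimage_isClosed_of_isClosed isClosed_Icc isClosed_Iic
  have hS'bdd : BddBelow S' := ⟨t0, fun x hx => hx.1.1⟩
  set t2 := sInf S' with ht2def
  have ht2mem : t2 ∈ S' := hS'closed.csInf_mem hS'ne hS'bdd
  have ht2le : t2 ≤ u1 := ht2mem.1.2
  have ht2ge : t0 ≤ t2 := ht2mem.1.1
  have ht2s : t2 < s := lt_of_le_of_lt ht2le hu1lt
  have hGt2 : G t2 ≤ 0 := ht2mem.2
  -- G > 0 on [t0, t2)
  have hGpos : ∀ x ∈ Set.Ico t0 t2, 0 < G x := by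
    intro x hx
    by_contra h
    push_neg at h
    have : x ∈ S' := ⟨⟨hx.1, hx.2.le.trans ht2le⟩, h⟩
    exact absurd (csInf_le hS'bdd this) (not_le.mpr hx.2)
  have hsubIcc : Set.Icc t0 t2 ⊆ Set.Ico 0 s := fun x hx =>
    ⟨le_trans ht0mem.1 hx.1, lt_of_le_of_lt hx.2 ht2s⟩
  have hsubIoo : Set.Ioo t0 t2 ⊆ Set.Ico 0 s := fun x hx => hsubIcc ⟨hx.1.le, hx.2.le⟩
  -- F is monotone on [t0, t2]
  have hFmono : MonotoneOn F (Set.Icc t0 t2) := by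
    apply monotoneOn_of_deriv_nonneg (convex_Icc t0 t2)
    · exact fun x hx => ((hFderiv x (hsubIcc hx)).continuousAt).continuousWithinAt
    · intro x hx
      rw [interior_Icc] at hx
      exact ((hFderiv x (hsubIoo hx)).differentiableAt).differentiableWithinAt
    · intro x hx
      rw [interior_Icc] at hx
      rw [(hFderiv x (hsubIoo hx)).deriv]
      have hGx : 0 < G x := hGpos x ⟨hx.1.le, hx.2⟩
      have hxle : hS x ≤ hR x := by simp only [hGdef] at hGx; linarith
      have hexp : Real.exp (lam * hS x) ≤ Real.exp (lam * hR x) :=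
        Real.exp_le_exp.mpr (mul_le_mul_of_nonneg_left hxle hlam.le)
      have hDx : 0 ≤ D x := hDnonneg x (hsubIco (hsubIoo hx))
      have : (0:ℝ) ≤ (n:ℝ) * D x := mul_nonneg (Nat.cast_nonneg n) hDx
      nlinarith
  -- hence hs' ≤ hr' on [t0, t2]
  have hder_le : ∀ x ∈ Set.Icc t0 t2, hs' x ≤ hr' x := by
    intro x hx
    have hF : 0 ≤ F x := by
      have := hFmono (Set.left_mem_Icc.mpr ht2ge) hx hx.1
      rw [hFt0] at this; exact this
    have h1 : hs' x ^ n ≤ hr' x ^ n := by simp only [hFdef] at hF; linarith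
    have hnz : n ≠ 0 := by omega
    exact (pow_le_pow_iff_left₀ (hs'nonneg x (hsubIcc hx))
      (hr'nonneg x (hsubIco (hsubIcc hx))) hnz).mp h1
  -- hence G is monotone on [t0, t2]
  have hGmono : MonotoneOn G (Set.Icc t0 t2) := by
    apply monotoneOn_of_deriv_nonneg (convex_Icc t0 t2)
    · exact fun x hx => ((hGderiv x (hsubIcc hx)).continuousAt).continuousWithinAt
    · intro x hx
      rw [interior_Icc] at hx
      exact ((hGderiv x (hsubIoo hx)).differentiableAt).differentiableWithinAt
    · intro x hx
      rw [interior_Icc] at hx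
      rw [(hGderiv x (hsubIoo hx)).deriv]
      have := hder_le x ⟨hx.1.le, hx.2.le⟩
      linarith
  have := hGmono (Set.left_mem_Icc.mpr ht2ge) (Set.right_mem_Icc.mpr ht2ge) ht2ge
  linarith
end

section
/- The limit potential K for M = ℝ^n satisfies K''(u)(K'(u))^{n-1} = u^{n-1} with K'(0) = 0, K' ≥ 0, whose solutions are exactly K(u) = u^2/2 + c for a constant c; in particular K''(u) = 1 for all u. -/
open Real Set

theorem euclidean_limit_potential
    (n : ℕ) (hn : 1 ≤ n) (K K' K'' : ℝ → ℝ)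
    (hder1 : ∀ u : ℝ, 0 ≤ u → HasDerivAt K (K' u) u)
    (hder2 : ∀ u : ℝ, 0 ≤ u → HasDerivAt K' (K'' u) u)
    (hK'0 : K' 0 = 0)
    (hK'nonneg : ∀ u : ℝ, 0 ≤ u → 0 ≤ K' u)
    (hODE : ∀ u : ℝ, 0 ≤ u → K'' u * (K' u) ^ (n - 1) = u ^ (n - 1)) :
    (∃ c : ℝ, ∀ u : ℝ, 0 ≤ u → K u = u ^ 2 / 2 + c) ∧
    (∀ u : ℝ, 0 ≤ u → K'' u = 1) := by
  -- Step 1: K' u = u for all u ≥ 0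
  have hK' : ∀ u : ℝ, 0 ≤ u → K' u = u := by
    intro u hu
    set g : ℝ → ℝ := fun x => (K' x) ^ n - x ^ n with hg
    have hgd : ∀ x : ℝ, 0 ≤ x → HasDerivAt g 0 x := by
      intro x hx
      have h1 : HasDerivAt (fun y => (K' y) ^ n) (n * K' x ^ (n - 1) * K'' x) x :=
        (hder2 x hx).pow n
      have h2 : HasDerivAt (fun y : ℝ => y ^ n) (n * x ^ (n - 1)) x := by
        simpa using (hasDerivAt_pow n x)
      have := h1.sub h2
      have heq : (n : ℝ) * K' x ^ (n - 1) * K'' x - n * x ^ (n - 1) = 0 := by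
        have := hODE x hx
        nlinarith [this]
      rw [heq] at this
      exact this
    have hcont : ContinuousOn g (Icc 0 u) := fun x hx =>
      ((hgd x hx.1).continuousAt).continuousWithinAt
    have hright : ∀ x ∈ Ico 0 u, HasDerivWithinAt g 0 (Ici x) x := fun x hx =>
      (hgd x hx.1).hasDerivWithinAt
    have hconst := constant_of_has_deriv_right_zero hcont hright u (by exact ⟨hu, le_rfl⟩)
    have hg0 : g 0 = 0 := by simp [hg, hK'0, zero_pow (by omega : n ≠ 0)]
    have hgu : (K' u) ^ n = u ^ n := by
      have : g u = 0 := hconst.trans hg0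
      simpa [hg, sub_eq_zero] using this
    exact (pow_left_inj₀ (hK'nonneg u hu) hu (by omega : n ≠ 0)).mp hgu
  -- Step 2: K'' u = 1 for all u ≥ 0 (uniqueness of derivative within Ici 0)
  have hK'' : ∀ u : ℝ, 0 ≤ u → K'' u = 1 := by
    intro u hu
    have h1 : HasDerivWithinAt K' (K'' u) (Ici 0) u := (hder2 u hu).hasDerivWithinAt
    have h2 : HasDerivWithinAt K' 1 (Ici 0) u := by
      have hid : HasDerivWithinAt (fun x : ℝ => x) 1 (Ici 0) u :=
        (hasDerivAt_id u).hasDerivWithinAt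
      exact hid.congr (fun x hx => hK' x hx) (hK' u hu)
    have hud : UniqueDiffWithinAt ℝ (Ici (0:ℝ)) u := uniqueDiffOn_Ici 0 u hu
    have e1 := h1.derivWithin hud
    have e2 := h2.derivWithin hud
    rw [← e1, ← e2]
  refine ⟨⟨K 0, ?_⟩, hK''⟩
  intro u hu
  set h : ℝ → ℝ := fun x => K x - x ^ 2 / 2 with hh
  have hhd : ∀ x : ℝ, 0 ≤ x → HasDerivAt h 0 x := by
    intro x hx
    have h2 : HasDerivAt (fun y : ℝ => y ^ 2 / 2) x x := by
      have := (hasDerivAt_pow 2 x).div_const 2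
      simpa using this
    have := (hder1 x hx).sub h2
    rw [hK' x hx, sub_self] at this
    exact this
  have hcont : ContinuousOn h (Icc 0 u) := fun x hx =>
    ((hhd x hx.1).continuousAt).continuousWithinAt
  have hright : ∀ x ∈ Ico 0 u, HasDerivWithinAt h 0 (Ici x) x := fun x hx =>
    (hhd x hx.1).hasDerivWithinAt
  have hconst := constant_of_has_deriv_right_zero hcont hright u ⟨hu, le_rfl⟩
  have : K u - u ^ 2 / 2 = K 0 := by simpa [hh] using hconst
  linarith
end

section
/- Let n ≥ 1 and for each r ∈ (0, π) let h_r : [0, r) → ℝ be the increasing C^2 blow-up solution of h_r''(h_r')^{n-1} = e^{h_r} (sin u)^{n-1} with h_r'(0)=0, h_r' ≥ 0. Then h_r(0) ≥ -π · n^{1/n} · π^{1/n}. -/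
open Real Set

theorem hyperbolic_potential_lower_bound
    (n : ℕ) (hn : 1 ≤ n) (r : ℝ) (hr0 : 0 < r) (hrπ : r < Real.pi)
    (h h' h'' : ℝ → ℝ)
    (hder1 : ∀ u ∈ Set.Ico 0 r, HasDerivAt h (h' u) u)
    (hder2 : ∀ u ∈ Set.Ico 0 r, HasDerivAt h' (h'' u) u)
    (hODE : ∀ u ∈ Set.Ico 0 r,
      h'' u * (h' u) ^ (n - 1) = Real.exp (h u) * (Real.sin u) ^ (n - 1))
    (h'0 : h' 0 = 0)
    (h'nonneg : ∀ u ∈ Set.Ico 0 r, 0 ≤ h' u)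
    (h''nonneg : ∀ u ∈ Set.Ico 0 r, 0 ≤ h'' u)
    (hblow : Filter.Tendsto h (nhdsWithin r (Set.Iio r)) Filter.atTop) :
    -Real.pi * (n : ℝ) ^ ((1 : ℝ) / n) * Real.pi ^ ((1 : ℝ) / n) ≤ h 0 := by
  have hπ : (0:ℝ) < Real.pi := Real.pi_pos
  have hnpos : (0:ℝ) < n := by exact_mod_cast hn
  have hCnn : (0:ℝ) ≤ (n:ℝ) * Real.pi := by positivity
  set C : ℝ := ((n:ℝ) * Real.pi) ^ ((1:ℝ)/n) with hC
  have hCsplit : C = (n : ℝ) ^ ((1 : ℝ) / n) * Real.pi ^ ((1 : ℝ) / n) :=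
    Real.mul_rpow (by positivity) hπ.le
  have hCnonneg : 0 ≤ C := Real.rpow_nonneg hCnn _
  rw [mul_assoc, ← hCsplit, neg_mul]
  by_cases h0 : 0 ≤ h 0
  · linarith [mul_nonneg hπ.le hCnonneg]
  push_neg at h0
  -- find b ∈ (0, r) with h b ≥ 0
  have hne : (nhdsWithin r (Set.Iio r)).NeBot := nhdsWithin_Iio_self_neBot' ⟨0, hr0⟩
  have hev : ∀ᶠ u in nhdsWithin r (Set.Iio r), 0 ≤ h u ∧ u ∈ Set.Ioo 0 r := by
    filter_upwards [hblow.eventually_ge_atTop 0,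
      Ioo_mem_nhdsLT_of_mem (Set.mem_Ioc.mpr ⟨hr0, le_refl r⟩)] with u h1 h2
    exact ⟨h1, h2⟩
  obtain ⟨b, hb0, hb_pos, hb_lt⟩ := hev.exists
  have hsubIcc : Set.Icc (0:ℝ) b ⊆ Set.Ico 0 r := fun u hu => ⟨hu.1, lt_of_le_of_lt hu.2 hb_lt⟩
  have hcont : ContinuousOn h (Set.Icc 0 b) := fun u hu =>
    ((hder1 u (hsubIcc hu)).continuousAt).continuousWithinAt
  -- IVT: get a with h a = 0
  obtain ⟨a, haI, ha0⟩ := intermediate_value_Icc hb_pos.le hcont ⟨h0.le, hb0⟩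
  have ha_lt : a < r := lt_of_le_of_lt haI.2 hb_lt
  have ha_le_pi : a ≤ Real.pi := le_of_lt (lt_trans ha_lt hrπ)
  have hasub : Set.Icc (0:ℝ) a ⊆ Set.Ico 0 r := fun u hu => ⟨hu.1, lt_of_le_of_lt hu.2 ha_lt⟩
  -- h monotone on [0,a]
  have hmono : MonotoneOn h (Set.Icc 0 a) := by
    apply monotoneOn_of_deriv_nonneg (convex_Icc 0 a)
      (fun u hu => ((hder1 u (hasub hu)).continuousAt).continuousWithinAt)
    · intro u hu
      rw [interior_Icc] at hu
      exact ((hder1 u (hasub ⟨hu.1.le, hu.2.le⟩)).differentiableAt.differentiableWithinAt)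
    · intro u hu
      rw [interior_Icc] at hu
      rw [(hder1 u (hasub ⟨hu.1.le, hu.2.le⟩)).deriv]
      exact h'nonneg u (hasub ⟨hu.1.le, hu.2.le⟩)
  have hle0 : ∀ u ∈ Set.Icc (0:ℝ) a, h u ≤ 0 := fun u hu => by
    have := hmono hu (Set.right_mem_Icc.mpr haI.1) hu.2
    linarith [ha0 ▸ this]
  -- derivative of (h')^n on [0,a] bounded by n
  have hG : ∀ u ∈ Set.Icc (0:ℝ) a,
      HasDerivWithinAt (fun t => (h' t) ^ n) ((n:ℝ) * (Real.exp (h u) * (Real.sin u) ^ (n-1)))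
        (Set.Icc 0 a) u := by
    intro u hu
    have hd := (hder2 u (hasub hu)).pow n
    have : (↑n * h' u ^ (n - 1) * h'' u) = (n:ℝ) * (Real.exp (h u) * (Real.sin u) ^ (n-1)) := by
      rw [← hODE u (hasub hu)]; ring
    rw [this] at hd
    exact hd.hasDerivWithinAt
  have hGbound : ∀ u ∈ Set.Icc (0:ℝ) a,
      ‖(n:ℝ) * (Real.exp (h u) * (Real.sin u) ^ (n-1))‖ ≤ (n:ℝ) := by
    intro u hu
    have hsin0 : 0 ≤ Real.sin u := Real.sin_nonneg_of_nonneg_of_le_pi hu.1 (hu.2.trans ha_le_pi)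
    have hsin1 : Real.sin u ≤ 1 := Real.sin_le_one u
    have hexp : Real.exp (h u) ≤ 1 := Real.exp_le_one_iff.mpr (hle0 u hu)
    have h1 : 0 ≤ Real.exp (h u) * (Real.sin u) ^ (n-1) := by positivity
    have h2 : Real.exp (h u) * (Real.sin u) ^ (n-1) ≤ 1 := by
      calc Real.exp (h u) * (Real.sin u) ^ (n-1) ≤ 1 * 1 :=
        mul_le_mul hexp (pow_le_one₀ hsin0 hsin1) (by positivity) (by norm_num)
      _ = 1 := by ring
    rw [Real.norm_eq_abs, abs_of_nonneg (by positivity)]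
    nlinarith
  -- mean value: (h' t)^n ≤ n * t ≤ n * π on [0,a]
  have hpow_le : ∀ t ∈ Set.Icc (0:ℝ) a, (h' t) ^ n ≤ (n:ℝ) * Real.pi := by
    intro t ht
    have := (convex_Icc (0:ℝ) a).norm_image_sub_le_of_norm_hasDerivWithin_le hG hGbound
      (Set.left_mem_Icc.mpr haI.1) ht
    rw [h'0, zero_pow (by omega), sub_zero, sub_zero, Real.norm_eq_abs, Real.norm_eq_abs,
      abs_of_nonneg ht.1] at this
    have h1 : (h' t) ^ n ≤ |(h' t) ^ n| := le_abs_self _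
    have ht_pi : t ≤ Real.pi := ht.2.trans ha_le_pi
    nlinarith
  -- hence h' t ≤ C
  have hh'le : ∀ t ∈ Set.Icc (0:ℝ) a, ‖h' t‖ ≤ C := by
    intro t ht
    have hnn := h'nonneg t (hasub ht)
    rw [Real.norm_eq_abs, abs_of_nonneg hnn]
    have : h' t = ((h' t) ^ n) ^ ((1:ℝ)/n) := by
      rw [← Real.rpow_natCast (h' t) n, ← Real.rpow_mul hnn]
      rw [mul_one_div, div_self (by positivity), Real.rpow_one]
    rw [this, hC]
    exact Real.rpow_le_rpow (by positivity) (hpow_le t ht) (by positivity)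
  -- mean value for h
  have hfinal := (convex_Icc (0:ℝ) a).norm_image_sub_le_of_norm_hasDerivWithin_le
    (fun u hu => (hder1 u (hasub hu)).hasDerivWithinAt) hh'le
    (Set.left_mem_Icc.mpr haI.1) (Set.right_mem_Icc.mpr haI.1)
  rw [ha0, zero_sub, sub_zero, Real.norm_eq_abs, Real.norm_eq_abs, abs_neg,
    abs_of_nonpos h0.le, abs_of_nonneg haI.1] at hfinal
  have hCa : C * a ≤ C * Real.pi := by
    apply mul_le_mul_of_nonneg_left ha_le_pi hCnonneg
  linarith
end
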